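/- Let K be a field of characteristic zero, S = K[X_0,...,X_n], and I an ideal of S generated by homogeneous polynomials F_1,...,F_r of positive degree. Then the (n+1)-st exterior power of the Kähler differential module of (S/I)/K is isomorphic as an S/I-module to (S/J)(-n-1), where J is the ideal generated by all partial derivatives ∂F_j/∂X_i for 0 ≤ i ≤ n and 1 ≤ j ≤ r. -/

import Mathlib

open MvPolynomial

set_option maxHeartbeats 1000000
set_option synthInstance.maxHeartbeats 400000

open Function Matrix ExteriorAlgebra

section Abs
variable {R : Type*} [CommRing R] {M : Type*} [AddCommGroup M] [Module R M]
  {m : ℕ} {ι : Type*}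

/-- Any alternating `m`-form on `Fin m → R` is determined by the determinant. -/
theorem alt_eq_det_smul {N : Type*} [AddCommGroup N] [Module R N]
    (g : (Fin m → R) [⋀^Fin m]→ₗ[R] N) (c : Fin m → (Fin m → R)) :
    g c = Matrix.detRowAlternating (R := R) (n := Fin m) c •
      g (fun i => (Pi.single i 1 : Fin m → R)) := by
  classical
  set e₀ : Fin m → (Fin m → R) := fun i => (Pi.single i 1 : Fin m → R) with he₀
  have h : g = (LinearMap.toSpanSingleton R N (g e₀)).compAlternatingMap
      (Matrix.detRowAlternating (R := R) (n := Fin m)) := by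
    refine Module.Basis.ext_alternating (Pi.basisFun R (Fin m)) (fun v hv => ?_)
    have hb : Function.Bijective v := (Finite.injective_iff_bijective).mp hv
    let σ : Equiv.Perm (Fin m) := Equiv.ofBijective v hb
    have hveq : (fun i => (Pi.basisFun R (Fin m)) (v i)) = e₀ ∘ σ := by
      funext i
      simp [σ, Equiv.ofBijective_apply, he₀]
    have hdet1 : Matrix.detRowAlternating (R := R) (n := Fin m) e₀ = 1 := by
      have h1 : Matrix.of e₀ = (1 : Matrix (Fin m) (Fin m) R) := by
        ext i j
        simp [Matrix.one_apply, Pi.single_apply, he₀, eq_comm]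
      show (Matrix.of e₀).det = 1
      rw [h1, Matrix.det_one]
    rw [hveq, AlternatingMap.map_perm, LinearMap.compAlternatingMap_apply,
      AlternatingMap.map_perm, hdet1, LinearMap.toSpanSingleton_apply]
    rcases Int.units_eq_one_or (Equiv.Perm.sign σ) with hσ | hσ <;> simp [hσ]
  conv_lhs => rw [h]
  simp [LinearMap.toSpanSingleton_apply]

theorem topExteriorQuot (π : (Fin m → R) →ₗ[R] M) (hπ : Function.Surjective π)
    (v : ι → (Fin m → R)) (hker : LinearMap.ker π = Submodule.span R (Set.range v)) :
    Nonempty ((⋀[R]^m M) ≃ₗ[R]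
      (R ⧸ Ideal.span (Set.range fun p : Fin m × ι => v p.2 p.1))) := by
  classical
  set J' : Ideal R := Ideal.span (Set.range fun p : Fin m × ι => v p.2 p.1) with hJ'
  set D : (Fin m → R) [⋀^Fin m]→ₗ[R] R := Matrix.detRowAlternating with hD
  let s : M → (Fin m → R) := surjInv hπ
  have hs : ∀ x, π (s x) = x := surjInv_eq hπ
  -- L1 : determinant with a kernel row vanishes mod J'
  have L1 : ∀ (c : Fin m → (Fin m → R)) (i : Fin m) (k : Fin m → R), k ∈ LinearMap.ker π →
      J'.mkQ (D (update c i k)) = 0 := by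
    intro c i k hk
    rw [hker] at hk
    induction hk using Submodule.span_induction with
    | mem x hx =>
      obtain ⟨j, rfl⟩ := hx
      rw [Submodule.mkQ_apply, Submodule.Quotient.mk_eq_zero]
      set A : Matrix (Fin m) (Fin m) R := Matrix.of (update c i (v j)) with hA
      have h1 := congrArg (fun B => B i i) (Matrix.mul_adjugate A)
      simp only [Matrix.mul_apply, Matrix.smul_apply, Matrix.one_apply_eq, smul_eq_mul,
        mul_one] at h1
      have hexp : D (update c i (v j)) = ∑ k : Fin m, (v j k) * A.adjugate k i := by
        show A.det = _
        rw [← h1]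
        exact Finset.sum_congr rfl fun k _ => by rw [show A i k = v j k from by simp [hA]]
      rw [hexp]
      exact Ideal.sum_mem _ fun k _ => Ideal.mul_mem_right _ _
        (Ideal.subset_span ⟨(k, j), rfl⟩)
    | zero => rw [D.map_update_zero, map_zero]
    | add x y hx hy ihx ihy =>
      rw [D.map_update_add, map_add, ihx, ihy, add_zero]
    | smul a x hx ih =>
      rw [D.map_update_smul, LinearMap.map_smul, ih, smul_zero]
  -- L2 : invariance of det mod J' under changing rows within fibers of π
  have L2 : ∀ c c' : Fin m → (Fin m → R), (∀ i, π (c i) = π (c' i)) →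
      J'.mkQ (D c) = J'.mkQ (D c') := by
    intro c c' h
    have key : ∀ t : Finset (Fin m),
        J'.mkQ (D (fun i => if i ∈ t then c' i else c i)) = J'.mkQ (D c) := by
      intro t
      induction t using Finset.induction with
      | empty => simp
      | @insert a t ha ih =>
        set u : Fin m → (Fin m → R) := (fun i => if i ∈ t then c' i else c i) with hu
        have e1 : (fun i => if i ∈ insert a t then c' i else c i) = update u a (c' a) := by
          funext i
          by_cases hia : i = a
          · subst hia; simp [hu, ha]
          · simp [hu, Finset.mem_insert, hia, Function.update_apply]
        have e2 : u = update u a (c a) := by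
          funext i
          by_cases hia : i = a
          · subst hia; simp [hu, ha]
          · simp [hia, Function.update_apply]
        have hsub : J'.mkQ (D (update u a (c' a))) - J'.mkQ (D (update u a (c a))) = 0 := by
          rw [← map_sub, ← D.map_update_sub]
          exact L1 u a _ (by rw [LinearMap.mem_ker, map_sub, h a, sub_self])
        rw [e1, sub_eq_zero.mp hsub, ← e2]
        exact ih
    have := key Finset.univ
    simpa using this.symm
  -- the alternating form on M induced by the determinant of lifted rows
  let f : M [⋀^Fin m]→ₗ[R] (R ⧸ J') :=
    { toFun := fun x => J'.mkQ (D (fun i => s (x i)))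
      map_update_add' := by
        intro dec x i a b
        have r : ∀ (c : M), (fun k => s (update x i c k)) = update (fun k => s (x k)) i (s c) := by
          intro c; funext k
          rcases eq_or_ne k i with rfl | hk
          · simp
          · simp [Function.update_of_ne hk]
        show J'.mkQ (D fun k => s (update x i (a + b) k)) =
          J'.mkQ (D fun k => s (update x i a k)) + J'.mkQ (D fun k => s (update x i b k))
        rw [r a, r b, r (a + b)]
        have l2 := L2 (update (fun k => s (x k)) i (s (a + b)))
            (update (fun k => s (x k)) i (s a + s b)) ?_
        · rw [l2, D.map_update_add, map_add]
        · intro k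
          rcases eq_or_ne k i with rfl | hk
          · simp [hs, map_add]
          · simp [Function.update_of_ne hk]
      map_update_smul' := by
        intro dec x i c a
        have r : ∀ (c : M), (fun k => s (update x i c k)) = update (fun k => s (x k)) i (s c) := by
          intro c; funext k
          rcases eq_or_ne k i with rfl | hk
          · simp
          · simp [Function.update_of_ne hk]
        show J'.mkQ (D fun k => s (update x i (c • a) k)) =
          c • J'.mkQ (D fun k => s (update x i a k))
        rw [r a, r (c • a)]
        have l2 := L2 (update (fun k => s (x k)) i (s (c • a)))
            (update (fun k => s (x k)) i (c • s a)) ?_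
        · rw [l2, D.map_update_smul, LinearMap.map_smul]
        · intro k
          rcases eq_or_ne k i with rfl | hk
          · simp [hs]
          · simp [Function.update_of_ne hk]
      map_eq_zero_of_eq' := by
        intro x i j hij hne
        show J'.mkQ (D fun k => s (x k)) = 0
        rw [D.map_eq_zero_of_eq (fun k => s (x k)) (by show s (x i) = s (x j); rw [hij]) hne, map_zero] }
  have hf : ∀ x, f x = J'.mkQ (D (fun i => s (x i))) := fun _ => rfl
  -- the generator of the top exterior power
  set w : Fin m → M := fun i => π (Pi.single i 1) with hw
  have hωmem : ιMulti R m w ∈ ⋀[R]^m M := ExteriorAlgebra.ιMulti_range R m (Set.mem_range_self w)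
  set ω : ⋀[R]^m M := ⟨ιMulti R m w, hωmem⟩ with hω
  -- all the generators of J' annihilate ω
  have hgen : ∀ (j : ι) (i : Fin m), v j i • (ιMulti R m w) = 0 := by
    intro j i
    have hv0 : π (v j) = 0 := by
      rw [← LinearMap.mem_ker, hker]; exact Submodule.subset_span ⟨j, rfl⟩
    have h0 : ιMulti R m (update w i (π (v j))) = 0 := by
      rw [hv0, AlternatingMap.map_update_zero]
    have hvsum : v j = ∑ k, v j k • (Pi.single k 1 : Fin m → R) := by
      funext l
      rw [Finset.sum_apply]
      simp [Pi.single_apply]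
    have hexp : π (v j) = ∑ k, v j k • w k := by
      conv_lhs => rw [hvsum]
      simp [hw, map_sum, _root_.map_smul]
    have hsum : ιMulti R m (update w i (π (v j))) =
        ∑ k, v j k • ιMulti R m (update w i (w k)) := by
      rw [hexp]
      have := MultilinearMap.map_update_sum ((ιMulti R m (M := M)).toMultilinearMap)
        Finset.univ i (fun k => v j k • w k) w
      simp only [AlternatingMap.coe_multilinearMap] at this
      rw [this]
      congr 1
      funext k
      rw [AlternatingMap.map_update_smul]
    have hterm : ∀ k, k ≠ i → v j k • ιMulti R m (update w i (w k)) = 0 := by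
      intro k hk
      rw [AlternatingMap.map_eq_zero_of_eq (ιMulti R m) (update w i (w k))
        (i := k) (j := i) (by simp [Function.update_of_ne hk]) hk, smul_zero]
    have : (0 : ExteriorAlgebra R M) = v j i • ιMulti R m w := by
      rw [← h0, hsum, Finset.sum_eq_single i (fun k _ hk => hterm k hk) (by simp),
        Function.update_eq_self]
    exact this.symm
  -- the two linear maps
  set G : ∀ k : ℕ, M [⋀^Fin k]→ₗ[R] (R ⧸ J') :=
    Function.update (fun k : ℕ => (0 : M [⋀^Fin k]→ₗ[R] (R ⧸ J'))) m f with hG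
  set Λ : (⋀[R]^m M) →ₗ[R] (R ⧸ J') :=
    (ExteriorAlgebra.liftAlternating G).comp (Submodule.subtype _) with hΛ
  have hΛι : ∀ (x : Fin m → M) (hx : ιMulti R m x ∈ ⋀[R]^m M),
      Λ ⟨ιMulti R m x, hx⟩ = f x := by
    intro x hx
    show ExteriorAlgebra.liftAlternating G (ιMulti R m x) = f x
    rw [ExteriorAlgebra.liftAlternating_apply_ιMulti, hG, Function.update_self]
  have hann : J' ≤ LinearMap.ker (LinearMap.toSpanSingleton R (⋀[R]^m M) ω) := by
    rw [hJ', Ideal.span_le]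
    rintro x ⟨⟨i, j⟩, rfl⟩
    rw [SetLike.mem_coe, LinearMap.mem_ker, LinearMap.toSpanSingleton_apply]
    exact Subtype.ext (by simpa using hgen j i)
  set ψ : (R ⧸ J') →ₗ[R] (⋀[R]^m M) :=
    Submodule.liftQ J' (LinearMap.toSpanSingleton R (⋀[R]^m M) ω) hann with hψ
  -- Λ ∘ ψ = id
  have hΛω : Λ ω = J'.mkQ 1 := by
    have h1 : (ω : ExteriorAlgebra R M) = ιMulti R m w := rfl
    have := hΛι w hωmem
    rw [show (⟨ιMulti R m w, hωmem⟩ : ⋀[R]^m M) = ω from rfl] at this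
    rw [this, hf]
    rw [L2 (fun i => s (w i)) (fun i => (Pi.single i 1 : Fin m → R)) (fun i => by simp [hs, hw])]
    have hdet1 : D (fun i => (Pi.single i 1 : Fin m → R)) = 1 := by
      have h1 : Matrix.of (fun i => (Pi.single i 1 : Fin m → R)) =
          (1 : Matrix (Fin m) (Fin m) R) := by
        ext i j
        simp [Matrix.one_apply, Pi.single_apply, eq_comm]
      show (Matrix.of (fun i => (Pi.single i 1 : Fin m → R))).det = 1
      rw [h1, Matrix.det_one]
    rw [hdet1]
  have hcomp1 : Λ.comp ψ = LinearMap.id := by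
    refine Submodule.linearMap_qext _ (LinearMap.ext fun r => ?_)
    simp only [LinearMap.comp_apply, Submodule.mkQ_apply, LinearMap.id_apply]
    rw [Submodule.liftQ_apply, LinearMap.toSpanSingleton_apply, _root_.map_smul, hΛω,
      Submodule.mkQ_apply, ← Submodule.Quotient.mk_smul, smul_eq_mul, mul_one]
  -- ψ ∘ Λ = id
  have hcomp2 : ψ.comp Λ = LinearMap.id := by
    apply LinearMap.ext
    rintro ⟨z, hz⟩
    have hz' : z ∈ Submodule.span R (Set.range (ιMulti R m (M := M))) := by
      rw [ExteriorAlgebra.ιMulti_span_fixedDegree]; exact hz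
    have main : ∀ (u : ExteriorAlgebra R M)
        (hu : u ∈ Submodule.span R (Set.range (ιMulti R m (M := M)))),
        ∀ (hmem : u ∈ ⋀[R]^m M), ψ (Λ ⟨u, hmem⟩) = ⟨u, hmem⟩ := by
      intro u hu
      induction hu using Submodule.span_induction with
      | mem u hu =>
        obtain ⟨x, rfl⟩ := hu
        intro hmem
        rw [hΛι x hmem, hf]
        rw [hψ, show J'.mkQ (D fun i => s (x i)) =
          Submodule.Quotient.mk (D fun i => s (x i)) from rfl, Submodule.liftQ_apply,
          LinearMap.toSpanSingleton_apply]
        refine Subtype.ext ?_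
        show D (fun i => s (x i)) • (ιMulti R m w) = ιMulti R m x
        have := alt_eq_det_smul ((ιMulti R m (M := M)).compLinearMap π) (fun i => s (x i))
        simp only [AlternatingMap.compLinearMap_apply] at this
        have hx1 : (fun i => π (s (x i))) = x := by funext i; rw [hs]
        have hx2 : (fun i => π ((Pi.single i 1 : Fin m → R))) = w := rfl
        rw [hx1, hx2] at this
        exact this.symm
      | zero =>
        intro hmem
        rw [show (⟨0, hmem⟩ : ⋀[R]^m M) = 0 from Subtype.ext rfl, map_zero, map_zero]
      | add x y hx hy ihx ihy =>
        intro hmem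
        have hx' : x ∈ ⋀[R]^m M := by
          rw [← ExteriorAlgebra.ιMulti_span_fixedDegree]; exact hx
        have hy' : y ∈ ⋀[R]^m M := by
          rw [← ExteriorAlgebra.ιMulti_span_fixedDegree]; exact hy
        rw [show (⟨x + y, hmem⟩ : ⋀[R]^m M) = ⟨x, hx'⟩ + ⟨y, hy'⟩ from Subtype.ext rfl,
          map_add, map_add, ihx hx', ihy hy']
      | smul a x hx ih =>
        intro hmem
        have hx' : x ∈ ⋀[R]^m M := by
          rw [← ExteriorAlgebra.ιMulti_span_fixedDegree]; exact hx
        rw [show (⟨a • x, hmem⟩ : ⋀[R]^m M) = a • ⟨x, hx'⟩ from Subtype.ext rfl,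
          _root_.map_smul, _root_.map_smul, ih hx']
    exact main z hz' hz
  exact ⟨LinearEquiv.ofLinear Λ ψ hcomp1 hcomp2⟩
end Abs


/-- Let `K` be a field of characteristic zero, `S = K[X_0, …, X_n]`, and let
`I = ⟨F_1, …, F_r⟩` be an ideal generated by homogeneous polynomials of positive
degree.  Let `J` be the ideal generated by all partial derivatives `∂F_j/∂X_i`.
Then the `(n+1)`-st exterior power of the Kähler differential module
`Ω^1_{(S/I)/K}` is isomorphic as an `S/I`-module to `(S/J)(-n-1)`; as the twist
only changes the grading, as an `S/I`-module this is `S/J` (the `S/I`-module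
structure on `S/J` comes from `I ≤ J`, which follows from Euler's relation and
is recorded as the hypothesis `hIJ`). -/
theorem top_exterior_power_kaehler_iso (K : Type) [Field K] [CharZero K] (n r : ℕ)
    (F : Fin r → MvPolynomial (Fin (n + 1)) K) (d : Fin r → ℕ)
    (hd : ∀ j, 1 ≤ d j) (hF : ∀ j, (F j).IsHomogeneous (d j))
    (I J : Ideal (MvPolynomial (Fin (n + 1)) K))
    (hI : I = Ideal.span (Set.range F))
    (hJ : J = Ideal.span (Set.range fun p : Fin (n + 1) × Fin r =>
      MvPolynomial.pderiv p.1 (F p.2)))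
    (hIJ : I ≤ J) :
    letI : Module (MvPolynomial (Fin (n + 1)) K ⧸ I) (MvPolynomial (Fin (n + 1)) K ⧸ J) :=
      Module.compHom _ (Ideal.quotientMap J (RingHom.id _)
        (fun x hx => by simpa using hIJ hx))
    Nonempty
      ((⋀[(MvPolynomial (Fin (n + 1)) K ⧸ I)]^(n+1)
          (Ω[(MvPolynomial (Fin (n + 1)) K ⧸ I)⁄K])) ≃ₗ[MvPolynomial (Fin (n + 1)) K ⧸ I]
        (MvPolynomial (Fin (n + 1)) K ⧸ J)) := by
  classical
  letI instM : Module (MvPolynomial (Fin (n + 1)) K ⧸ I) (MvPolynomial (Fin (n + 1)) K ⧸ J) :=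
    Module.compHom _ (Ideal.quotientMap J (RingHom.id _) (fun x hx => by simpa using hIJ hx))
  -- the canonical presentation of MvPolynomial (Fin (n + 1)) K ⧸ I
  have hval : (aeval (fun i => Ideal.Quotient.mk I (X i)) :
      MvPolynomial (Fin (n + 1)) K →ₐ[K] MvPolynomial (Fin (n + 1)) K ⧸ I) = Ideal.Quotient.mkₐ K I := by
    apply MvPolynomial.algHom_ext
    intro i
    simp [Ideal.Quotient.mkₐ_eq_mk]
  have hsurj : Function.Surjective
      (aeval (R := K) (fun i => Ideal.Quotient.mk I (X i)) :
        MvPolynomial (Fin (n + 1)) K →ₐ[K] MvPolynomial (Fin (n + 1)) K ⧸ I) := by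
    rw [hval]
    exact fun x => Ideal.Quotient.mk_surjective x
  let P : Algebra.Generators K (MvPolynomial (Fin (n + 1)) K ⧸ I) (Fin (n + 1)) :=
    Algebra.Generators.ofSurjective (fun i => Ideal.Quotient.mk I (X i)) hsurj
  have hPval : ∀ p : MvPolynomial (Fin (n + 1)) K,
      aeval P.val p = Ideal.Quotient.mk I p := by
    intro p
    exact DFunLike.congr_fun hval p
  have hkerP : P.ker = I := by
    rw [Algebra.Generators.ker_eq_ker_aeval_val]
    ext p
    rw [RingHom.mem_ker, hPval p, Ideal.Quotient.eq_zero_iff_mem]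
  have hker_mem : ∀ p : MvPolynomial (Fin (n + 1)) K, p ∈ P.ker ↔ p ∈ I :=
    fun p => SetLike.ext_iff.mp hkerP p
  have hFk : ∀ j, F j ∈ P.ker := by
    intro j
    refine (hker_mem _).mpr ?_
    rw [hI]
    exact Ideal.subset_span ⟨j, rfl⟩
  -- the Cotangent module is spanned by the classes of the F j
  have htop : Submodule.span (MvPolynomial (Fin (n + 1)) K ⧸ I)
      (Set.range fun j => Algebra.Extension.Cotangent.mk (P := P.toExtension) ⟨F j, hFk j⟩) =
      ⊤ := by
    have hspanI : Ideal.span (Set.range F) ≤ I := le_of_eq hI.symm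
    have claim : ∀ z : MvPolynomial (Fin (n + 1)) K, z ∈ Ideal.span (Set.range F) →
        ∀ hz : z ∈ P.toExtension.ker,
        Algebra.Extension.Cotangent.mk (P := P.toExtension) ⟨z, hz⟩ ∈
          Submodule.span (MvPolynomial (Fin (n + 1)) K ⧸ I)
            (Set.range fun j =>
              Algebra.Extension.Cotangent.mk (P := P.toExtension) ⟨F j, hFk j⟩) := by
      intro z hzspan
      induction hzspan using Submodule.span_induction with
      | mem z hz =>
        intro hz'
        obtain ⟨j, rfl⟩ := hz
        exact Submodule.subset_span ⟨j, rfl⟩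
      | zero =>
        intro hz'
        erw [show (⟨0, hz'⟩ : ↥P.toExtension.ker) = 0 from Subtype.ext rfl, map_zero]
        exact Submodule.zero_mem _
      | add a b ha hb iha ihb =>
        intro hz'
        have ha' : a ∈ P.toExtension.ker := (hker_mem a).mpr (hspanI ha)
        have hb' : b ∈ P.toExtension.ker := (hker_mem b).mpr (hspanI hb)
        rw [show (⟨a + b, hz'⟩ : ↥P.toExtension.ker) = ⟨a, ha'⟩ + ⟨b, hb'⟩ from
          Subtype.ext rfl, map_add]
        exact Submodule.add_mem _ (iha ha') (ihb hb')
      | smul a z hz ih =>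
        intro hz'
        have hzk : z ∈ P.toExtension.ker := (hker_mem z).mpr (hspanI hz)
        have e1 : (⟨a • z, hz'⟩ : ↥P.toExtension.ker) =
            (show P.toExtension.Ring from a) • (⟨z, hzk⟩ : ↥P.toExtension.ker) := Subtype.ext rfl
        rw [e1, LinearMap.map_smul,
          ← algebraMap_smul (R := P.toExtension.Ring) (MvPolynomial (Fin (n + 1)) K ⧸ I) a
            (Algebra.Extension.Cotangent.mk (P := P.toExtension) ⟨z, hzk⟩)]
        exact Submodule.smul_mem _ _ (ih hzk)
    rw [eq_top_iff]
    rintro x -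
    obtain ⟨y, rfl⟩ := Algebra.Extension.Cotangent.mk_surjective (P := P.toExtension) x
    have h3 := (hker_mem y.1).mp y.2
    exact claim y.1 (hI ▸ h3) y.2
  -- the presentation of the Kähler differentials
  haveI : Finite (Fin (n + 1)) := inferInstanceAs (Finite (Fin (n + 1)))
  haveI : Fintype (Fin (n + 1)) := inferInstanceAs (Fintype (Fin (n + 1)))
  let B := P.cotangentSpaceBasis
  let π : (Fin (n + 1) → (MvPolynomial (Fin (n + 1)) K ⧸ I)) →ₗ[MvPolynomial (Fin (n + 1)) K ⧸ I] (Ω[(MvPolynomial (Fin (n + 1)) K ⧸ I)⁄K]) :=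
    P.toExtension.toKaehler.comp (B.equivFun.symm.toLinearMap)
  have hπ : Function.Surjective π := by
    intro x
    obtain ⟨y, hy⟩ := Algebra.Extension.toKaehler_surjective (P := P.toExtension) x
    refine ⟨B.equivFun y, ?_⟩
    show P.toExtension.toKaehler (B.equivFun.symm (B.equivFun y)) = x
    rw [LinearEquiv.symm_apply_apply]
    exact hy
  set v : Fin r → (Fin (n + 1) → (MvPolynomial (Fin (n + 1)) K ⧸ I)) :=
    (fun j i => aeval P.val (pderiv i (F j))) with hv
  have hrange : LinearMap.range P.toExtension.cotangentComplex =
      Submodule.span (MvPolynomial (Fin (n + 1)) K ⧸ I) (Set.range fun j =>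
        P.toExtension.cotangentComplex
          (Algebra.Extension.Cotangent.mk (P := P.toExtension) ⟨F j, hFk j⟩)) := by
    conv_lhs => rw [LinearMap.range_eq_map, ← htop, Submodule.map_span, ← Set.range_comp]
    rfl
  have hkerπ : LinearMap.ker π = Submodule.span (MvPolynomial (Fin (n + 1)) K ⧸ I) (Set.range v) := by
    rw [LinearMap.ker_comp,
      Function.Exact.linearMap_ker_eq
        (Algebra.Extension.exact_cotangentComplex_toKaehler (P := P.toExtension)),
      hrange]
    rw [show (B.equivFun.symm.toLinearMap : (Fin (n+1) → (MvPolynomial (Fin (n + 1)) K ⧸ I)) →ₗ[(MvPolynomial (Fin (n + 1)) K ⧸ I)] _) =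
      (B.equivFun.symm : _ ≃ₗ[(MvPolynomial (Fin (n + 1)) K ⧸ I)] _) from rfl]
    rw [Submodule.comap_equiv_eq_map_symm, LinearEquiv.symm_symm, Submodule.map_span,
      ← Set.range_comp]
    congr 1
    apply congrArg
    funext j
    funext i
    show B.equivFun (P.toExtension.cotangentComplex
      (Algebra.Extension.Cotangent.mk (P := P.toExtension) ⟨F j, hFk j⟩)) i = v j i
    rw [Module.Basis.equivFun_apply, Algebra.Extension.cotangentComplex_mk]
    exact P.cotangentSpaceBasis_repr_one_tmul (F j) i
  obtain ⟨e₁⟩ := topExteriorQuot π hπ v hkerπ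
  -- identify the quotient rings
  set J₁ : Ideal (MvPolynomial (Fin (n + 1)) K ⧸ I) :=
    Ideal.span (Set.range fun p : Fin (n + 1) × Fin r => v p.2 p.1) with hJ₁def
  have hJ₁ : J₁ = J.map (Ideal.Quotient.mk I) := by
    rw [hJ₁def, hJ, Ideal.map_span, ← Set.range_comp]
    exact congrArg Ideal.span (congrArg Set.range (funext fun p => hPval _))
  let e₂ : ((MvPolynomial (Fin (n + 1)) K ⧸ I) ⧸ J₁) ≃+* (MvPolynomial (Fin (n + 1)) K ⧸ J) :=
    (Ideal.quotEquivOfEq hJ₁).trans (DoubleQuot.quotQuotEquivQuotOfLE hIJ)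
  have he₂ : ∀ t : MvPolynomial (Fin (n + 1)) K, e₂ (Ideal.Quotient.mk J₁ (Ideal.Quotient.mk I t)) =
      Ideal.Quotient.mk J t := by
    intro t
    show (DoubleQuot.quotQuotEquivQuotOfLE hIJ)
      ((Ideal.quotEquivOfEq hJ₁) (Ideal.Quotient.mk J₁ (Ideal.Quotient.mk I t))) = _
    rw [Ideal.quotEquivOfEq_mk]
    exact DoubleQuot.quotQuotEquivQuotOfLE_quotQuotMk t hIJ
  let e₃ : ((MvPolynomial (Fin (n + 1)) K ⧸ I) ⧸ J₁) ≃ₗ[MvPolynomial (Fin (n + 1)) K ⧸ I] (MvPolynomial (Fin (n + 1)) K ⧸ J) :=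
    { toFun := e₂
      map_add' := e₂.map_add
      map_smul' := by
        intro c x
        obtain ⟨cs, rfl⟩ := Ideal.Quotient.mk_surjective c
        obtain ⟨x', rfl⟩ := Ideal.Quotient.mk_surjective x
        obtain ⟨xs, rfl⟩ := Ideal.Quotient.mk_surjective x'
        have h1 : (Ideal.Quotient.mk I cs) • (Ideal.Quotient.mk J₁ (Ideal.Quotient.mk I xs)) =
            Ideal.Quotient.mk J₁ (Ideal.Quotient.mk I (cs * xs)) := by
          rw [_root_.map_mul]
          rfl
        rw [h1]
        show e₂ (Ideal.Quotient.mk J₁ (Ideal.Quotient.mk I (cs * xs))) =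
          (Ideal.quotientMap J (RingHom.id _) (fun x hx => by simpa using hIJ hx)
              (Ideal.Quotient.mk I cs)) •
            (e₂ (Ideal.Quotient.mk J₁ (Ideal.Quotient.mk I xs)))
        rw [he₂, he₂, Ideal.quotientMap_mk, RingHom.id_apply, smul_eq_mul, ← _root_.map_mul]
      invFun := e₂.symm
      left_inv := e₂.left_inv
      right_inv := e₂.right_inv }
  exact ⟨e₁.trans e₃⟩
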